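/- Every non-empty Z^d shift space X satisfying topological strong spatial mixing with gap g contains a periodic point of period 2g in every coordinate direction. -/
import Mathlib

abbrev Site (d : ℕ) := Fin d → ℤ

def dist1 {d : ℕ} (p q : Site d) : ℕ := ∑ i, (p i - q i).natAbs

def unitVec {d : ℕ} (i : Fin d) : Site d := fun j => if j = i then 1 else 0

def IsShiftSpace {d : ℕ} {A : Type*} [TopologicalSpace A] (X : Set (Site d → A)) : Prop :=
  IsClosed X ∧ ∀ t : Site d, (fun (x : Site d → A) (q : Site d) => x (q + t)) '' X = X

def TSSM {d : ℕ} {A : Type*} (X : Set (Site d → A)) (g : ℕ) : Prop :=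
  ∀ U S V : Set (Site d), U.Finite → S.Finite → V.Finite →
    Disjoint U S → Disjoint S V → Disjoint U V →
    (∀ p ∈ U, ∀ q ∈ V, g ≤ dist1 p q) →
    ∀ u s v : Site d → A,
      (∃ x ∈ X, (∀ p ∈ U, x p = u p) ∧ (∀ p ∈ S, x p = s p)) →
      (∃ x ∈ X, (∀ p ∈ S, x p = s p) ∧ (∀ p ∈ V, x p = v p)) →
      ∃ x ∈ X, (∀ p ∈ U, x p = u p) ∧ (∀ p ∈ S, x p = s p) ∧ ∀ p ∈ V, x p = v p

namespace TssmAux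

variable {d : ℕ}

/-- componentwise residue mod `m` -/
def res (m : ℤ) (p : Site d) : Site d := fun j => p j % m

/-- componentwise quotient by `m` -/
def cell (m : ℤ) (p : Site d) : Site d := fun j => p j / m

lemma res_res (m : ℤ) (p : Site d) : res m (res m p) = res m p := by
  funext j; exact Int.emod_emod_of_dvd _ dvd_rfl

lemma res_sub_smul (m : ℤ) (p v : Site d) : res m (p - m • v) = res m p := by
  funext j
  show (p j - m * v j) % m = p j % m
  have h : p j - m * v j = p j + m * (-(v j)) := by ring
  rw [h, Int.add_mul_emod_self_left]

lemma sub_cell (m : ℤ) (p : Site d) : p - m • cell m p = res m p := by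
  funext j
  show p j - m * (p j / m) = p j % m
  rw [Int.emod_def]

lemma dist1_self (p : Site d) : dist1 p p = 0 := by simp [dist1]

/-- the subbox of the cell `[0, 2g)^d` selected by `ε` -/
def boxE (g : ℤ) (ε : Fin d → Bool) : Set (Site d) :=
  {x | ∀ j, (if ε j then g else 0) ≤ x j ∧ x j < (if ε j then g else 0) + g}

lemma boxE_disjoint {g : ℤ} {ε ε' : Fin d → Bool} (hne : ε ≠ ε') {x : Site d}
    (h1 : x ∈ boxE g ε) (h2 : x ∈ boxE g ε') : False := by
  obtain ⟨j, hj⟩ := Function.ne_iff.mp hne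
  have a1 := h1 j
  have a2 := h2 j
  rcases Bool.eq_false_or_eq_true (ε j) with h | h <;>
    rcases Bool.eq_false_or_eq_true (ε' j) with h' | h' <;>
      simp [h, h'] at hj a1 a2 ⊢ <;> omega

/-- two points whose residues lie in the same subbox but in different cells
are at distance `> g` -/
lemma boxE_far {g : ℕ} (hg : 0 < g) {ε : Fin d → Bool} {p q : Site d}
    (hp : res (2 * (g : ℤ)) p ∈ boxE (g : ℤ) ε) (hq : res (2 * (g : ℤ)) q ∈ boxE (g : ℤ) ε)
    (hc : cell (2 * (g : ℤ)) p ≠ cell (2 * (g : ℤ)) q) : g ≤ dist1 p q := by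
  set m : ℤ := 2 * (g : ℤ) with hm
  obtain ⟨j, hj⟩ := Function.ne_iff.mp hc
  have hj' : p j / m ≠ q j / m := hj
  have h1 : m * (p j / m) + p j % m = p j := Int.mul_ediv_add_emod _ _
  have h2 : m * (q j / m) + q j % m = q j := Int.mul_ediv_add_emod _ _
  have hr1 := hp j
  have hr2 := hq j
  have habs : (g : ℤ) ≤ |p j - q j| := by
    have hone : (1 : ℤ) ≤ |p j / m - q j / m| := Int.one_le_abs (sub_ne_zero.mpr hj')
    have hmm : m * |p j / m - q j / m| ≥ m := by
      nlinarith [hone, (by positivity : (0:ℤ) < m)]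
    have habs2 : |m * (p j / m - q j / m)| = m * |p j / m - q j / m| := by
      rw [abs_mul, abs_of_pos (by positivity : (0:ℤ) < m)]
    have htri : |m * (p j / m - q j / m)| ≤ |p j - q j| + |q j % m - p j % m| := by
      have he : m * (p j / m - q j / m) = (p j - q j) + (q j % m - p j % m) := by
        rw [mul_sub]; omega
      rw [he]; exact abs_add_le _ _
    have hrr : |q j % m - p j % m| < (g : ℤ) := by
      simp only [res, boxE, Set.mem_setOf_eq] at hr1 hr2
      rcases hr1, hr2 with ⟨ha, hb⟩
      rw [abs_lt]; constructor <;> [skip; skip] <;> omega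
    have : (0:ℤ) ≤ |p j - q j| := abs_nonneg _
    omega
  have hnat : g ≤ (p j - q j).natAbs := by
    rw [Int.abs_eq_natAbs] at habs
    exact_mod_cast habs
  calc g ≤ (p j - q j).natAbs := hnat
    _ ≤ dist1 p q := by
      unfold dist1
      exact Finset.single_le_sum (f := fun i => (p i - q i).natAbs)
        (fun i _ => Nat.zero_le _) (Finset.mem_univ j)

/-- compactness: if every finite set of pointwise constraints is realizable in the
closed set `X`, then all constraints are simultaneously realizable. -/
lemma exists_limit {A : Type*} [Fintype A] [TopologicalSpace A] [DiscreteTopology A]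
    (X : Set (Site d → A)) (hcl : IsClosed X)
    (Q : Site d → A → Prop)
    (happ : ∀ F : Finset (Site d), ∃ z ∈ X, ∀ p ∈ F, Q p (z p)) :
    ∃ z ∈ X, ∀ p, Q p (z p) := by
  have hZcl : ∀ F : Finset (Site d),
      IsClosed {z : Site d → A | z ∈ X ∧ ∀ p ∈ F, Q p (z p)} := by
    intro F
    have he : {z : Site d → A | z ∈ X ∧ ∀ p ∈ F, Q p (z p)}
        = X ∩ ⋂ p ∈ F, (fun z : Site d → A => z p) ⁻¹' {a | Q p a} := by
      ext z; simp [Set.mem_iInter]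
    rw [he]
    exact hcl.inter (isClosed_biInter fun p _ =>
      (isClosed_discrete _).preimage (continuous_apply p))
  obtain ⟨z, hz⟩ := IsCompact.nonempty_iInter_of_directed_nonempty_isCompact_isClosed
    (fun F : Finset (Site d) => {z : Site d → A | z ∈ X ∧ ∀ p ∈ F, Q p (z p)})
    (fun F F' => ⟨F ∪ F',
      fun z hz => ⟨hz.1, fun p hp => hz.2 p (Finset.mem_union_left _ hp)⟩,
      fun z hz => ⟨hz.1, fun p hp => hz.2 p (Finset.mem_union_right _ hp)⟩⟩)
    (fun F => by obtain ⟨z, hzX, hq⟩ := happ F; exact ⟨z, hzX, hq⟩)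
    (fun F => (hZcl F).isCompact)
    hZcl
  exact ⟨z, (Set.mem_iInter.mp hz ∅).1,
    fun p => (Set.mem_iInter.mp hz {p}).2 p (Finset.mem_singleton_self p)⟩

/-- one round: extend the periodic region from `W` to `W ∪ C`. -/
lemma round {A : Type*} [Fintype A] [TopologicalSpace A] [DiscreteTopology A]
    (X : Set (Site d → A)) (hX : IsShiftSpace X) (g : ℕ) (hg : 0 < g) (h : TSSM X g)
    (W C : Set (Site d))
    (hdisj : ∀ x : Site d, x ∈ W → x ∈ C → False)
    (hfar : ∀ p q : Site d, res (2 * (g:ℤ)) p ∈ C → res (2 * (g:ℤ)) q ∈ C →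
      cell (2 * (g:ℤ)) p ≠ cell (2 * (g:ℤ)) q → g ≤ dist1 p q)
    (R : Site d → A) (hR : R ∈ X)
    (hper : ∀ p : Site d, res (2 * (g:ℤ)) p ∈ W → R p = R (res (2 * (g:ℤ)) p)) :
    ∃ R' ∈ X, ∀ p : Site d, res (2 * (g:ℤ)) p ∈ W ∪ C → R' p = R' (res (2 * (g:ℤ)) p) := by
  set m : ℤ := 2 * (g : ℤ) with hm
  -- finite approximations
  have main : ∀ F : Finset (Site d), ∃ z ∈ X, ∀ p ∈ F,
      res m p ∈ W ∪ C → z p = R (res m p) := by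
    intro F
    -- sub-induction over the finite set of cells where copies of C are placed
    have sub : ∀ T : Finset (Site d), ∃ z ∈ X,
        (∀ p ∈ F, res m p ∈ W → z p = R (res m p)) ∧
        (∀ p ∈ F, res m p ∈ C → cell m p ∈ T → z p = R (res m p)) := by
      intro T
      induction T using Finset.induction_on with
      | empty =>
        exact ⟨R, hR, fun p _ hpW => hper p hpW, fun p _ _ hT => absurd hT (by simp)⟩
      | @insert v₀ T hv₀ ih =>
        obtain ⟨z, hzX, hz1, hz2⟩ := ih
        -- translate of R by m • v₀
        set w : Site d → A := fun q => R (q + -(m • v₀)) with hw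
        have hwX : w ∈ X := by
          rw [← hX.2 (-(m • v₀))]; exact ⟨R, hR, rfl⟩
        have hwval : ∀ p : Site d, res m p ∈ W → w p = R (res m p) := by
          intro p hpW
          have he : p + -(m • v₀) = p - m • v₀ := by rw [sub_eq_add_neg]
          have hres : res m (p - m • v₀) = res m p := res_sub_smul m p v₀
          calc w p = R (p - m • v₀) := by rw [hw]; simp only [he]
            _ = R (res m (p - m • v₀)) := hper _ (by rw [hres]; exact hpW)
            _ = R (res m p) := by rw [hres]
        -- the three sets
        set K : Set (Site d) := {q | res m q ∈ C ∧ cell m q = v₀} with hK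
        set U : Set (Site d) := {p | p ∈ F ∧ (res m p ∈ W ∨ (res m p ∈ C ∧ cell m p ∈ T)) ∧
          ∀ q ∈ K, g ≤ dist1 p q} with hU
        set S : Set (Site d) := {p | p ∈ F ∧ res m p ∈ W ∧ ∃ q ∈ K, dist1 p q < g} with hS
        set V : Set (Site d) := {p | p ∈ F ∧ p ∈ K} with hV
        have hUF : U ⊆ (F : Set (Site d)) := fun p hp => hp.1
        have hSF : S ⊆ (F : Set (Site d)) := fun p hp => hp.1
        have hVF : V ⊆ (F : Set (Site d)) := fun p hp => hp.1
        have hfin := F.finite_toSet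
        obtain ⟨z', hz'X, hz'U, hz'S, hz'V⟩ :=
          h U S V (hfin.subset hUF) (hfin.subset hSF) (hfin.subset hVF)
            (Set.disjoint_left.mpr (by
              rintro p ⟨-, -, hall⟩ ⟨-, -, q, hqK, hqlt⟩
              exact absurd (hall q hqK) (by omega)))
            (Set.disjoint_left.mpr (by
              rintro p ⟨-, hpW, -⟩ ⟨-, hpC, -⟩
              exact hdisj _ hpW hpC))
            (Set.disjoint_left.mpr (by
              rintro p ⟨-, -, hall⟩ ⟨-, hpK⟩
              have := hall p hpK
              rw [dist1_self] at this
              omega))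
            (fun p hp q hq => hp.2.2 q hq.2)
            z w w
            ⟨z, hzX, fun p _ => rfl, fun p hp => by
              rw [hz1 p hp.1 hp.2.1, ← hwval p hp.2.1]⟩
            ⟨w, hwX, fun p _ => rfl, fun p _ => rfl⟩
        refine ⟨z', hz'X, ?_, ?_⟩
        · intro p hpF hpW
          by_cases hc : ∀ q ∈ K, g ≤ dist1 p q
          · rw [hz'U p ⟨hpF, Or.inl hpW, hc⟩]
            exact hz1 p hpF hpW
          · push_neg at hc
            obtain ⟨q, hqK, hqlt⟩ := hc
            rw [hz'S p ⟨hpF, hpW, q, hqK, hqlt⟩]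
            exact hwval p hpW
        · intro p hpF hpC hpT
          rcases eq_or_ne (cell m p) v₀ with hcv | hcv
          · rw [hz'V p ⟨hpF, hpC, hcv⟩]
            have he : p + -(m • v₀) = res m p := by
              rw [← hcv, ← sub_eq_add_neg]; exact sub_cell m p
            rw [hw]; simp only [he]
          · have hpT' : cell m p ∈ T := by
              rcases Finset.mem_insert.mp hpT with h' | h'
              · exact absurd h' hcv
              · exact h'
            have hfarp : ∀ q ∈ K, g ≤ dist1 p q := by
              intro q hqK
              exact hfar p q hpC hqK.1 (by rw [hqK.2]; exact hcv)
            rw [hz'U p ⟨hpF, Or.inr ⟨hpC, hpT'⟩, hfarp⟩]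
            exact hz2 p hpF hpC hpT'
    obtain ⟨z, hzX, hc1, hc2⟩ := sub (F.image (cell m))
    refine ⟨z, hzX, fun p hpF hpWC => ?_⟩
    rcases hpWC with hpW | hpC
    · exact hc1 p hpF hpW
    · exact hc2 p hpF hpC (Finset.mem_image_of_mem _ hpF)
  obtain ⟨R', hR'X, hR'⟩ := exists_limit X hX.1
    (fun p a => res m p ∈ W ∪ C → a = R (res m p)) main
  refine ⟨R', hR'X, fun p hp => ?_⟩
  have h1 : R' p = R (res m p) := hR' p hp
  have h2 : R' (res m p) = R (res m p) := by
    have := hR' (res m p)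
    rw [res_res] at this
    exact this hp
  rw [h1, h2]

end TssmAux

open TssmAux in
/-- A non-empty shift space satisfying TSSM with gap `g` contains a point which is
periodic of period `2g` in every coordinate direction. -/
theorem tssm_periodic_point {d : ℕ} {A : Type*} [Fintype A]
    [TopologicalSpace A] [DiscreteTopology A]
    (X : Set (Site d → A)) (hX : IsShiftSpace X) (hne : X.Nonempty)
    (g : ℕ) (h : TSSM X g) :
    ∃ x ∈ X, ∀ (i : Fin d) (p : Site d), x (p + (2 * g) • unitVec i) = x p := by
  rcases Nat.eq_zero_or_pos g with hg | hg
  · obtain ⟨x, hx⟩ := hne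
    refine ⟨x, hx, fun i p => ?_⟩
    subst hg
    norm_num
  · set m : ℤ := 2 * (g : ℤ) with hm
    have hmpos : (0:ℤ) < m := by positivity
    -- outer induction over the family of subboxes
    have outer : ∀ s : Finset (Fin d → Bool), ∃ R ∈ X, ∀ p : Site d,
        res m p ∈ (⋃ ε ∈ s, boxE (g:ℤ) ε) → R p = R (res m p) := by
      intro s
      induction s using Finset.induction_on with
      | empty =>
        obtain ⟨R, hR⟩ := hne
        exact ⟨R, hR, fun p hp => by simp at hp⟩
      | @insert ε s hεs ih =>
        obtain ⟨R, hRX, hRper⟩ := ih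
        obtain ⟨R', hR'X, hR'⟩ := round X hX g hg h
          (⋃ ε' ∈ s, boxE (g:ℤ) ε') (boxE (g:ℤ) ε)
          (by
            intro x hxW hxC
            obtain ⟨ε', hε's, hx'⟩ := Set.mem_iUnion₂.mp hxW
            exact boxE_disjoint (by rintro rfl; exact hεs hε's) hx' hxC)
          (fun p q hp hq hc => boxE_far hg hp hq hc)
          R hRX hRper
        refine ⟨R', hR'X, fun p hp => ?_⟩
        apply hR'
        rcases Set.mem_iUnion₂.mp hp with ⟨ε', hε's, hx'⟩
        rcases Finset.mem_insert.mp hε's with he | he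
        · exact Or.inr (he ▸ hx')
        · exact Or.inl (Set.mem_iUnion₂.mpr ⟨ε', he, hx'⟩)
    obtain ⟨R, hRX, hRper⟩ := outer Finset.univ
    have hmem : ∀ p : Site d, res m p ∈ ⋃ ε ∈ (Finset.univ : Finset (Fin d → Bool)),
        boxE (g:ℤ) ε := by
      intro p
      refine Set.mem_iUnion₂.mpr ⟨fun j => decide ((g:ℤ) ≤ p j % m), Finset.mem_univ _, ?_⟩
      intro j
      have h0 : 0 ≤ p j % m := Int.emod_nonneg _ (by omega)
      have h1 : p j % m < m := Int.emod_lt_of_pos _ hmpos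
      by_cases hc : (g:ℤ) ≤ p j % m <;> simp [res, hc] <;> omega
    have hper : ∀ p : Site d, R p = R (res m p) := fun p => hRper p (hmem p)
    refine ⟨R, hRX, fun i p => ?_⟩
    have hres : res m (p + (2 * g) • unitVec i) = res m p := by
      funext j
      show (p j + (2 * g) • (unitVec i j)) % m = p j % m
      rcases eq_or_ne j i with he | he
      · have h2 : (2 * g) • (unitVec i j) = m := by
          subst he
          show (2 * g) • (if j = j then (1:ℤ) else 0) = m
          rw [if_pos rfl, nsmul_eq_mul, mul_one, hm]
          push_cast
          ring
        rw [h2]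
        have h3 := Int.add_mul_emod_self_left (p j) m 1
        rw [mul_one] at h3
        exact h3
      · have h2 : (2 * g) • (unitVec i j) = 0 := by simp [unitVec, he]
        rw [h2, add_zero]
    calc R (p + (2 * g) • unitVec i) = R (res m (p + (2 * g) • unitVec i)) := hper _
      _ = R (res m p) := by rw [hres]
      _ = R p := (hper p).symm
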